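/- Suppose a metric space X admits a family 𝓛 of closed subspaces which separates points (for any x ≠ y in X there is L ∈ 𝓛 with x and y in different components, i.e., different quasi-components, of X \ L) and ind(L') ≤ N − 1 for every locally compact subspace L' of every L ∈ 𝓛. Then every locally compact subspace of X has small inductive dimension at most N. -/

import Mathlib

universe u

/-- `IndLe n X` means the small inductive dimension of `X` is at most `n - 1`:
`IndLe 0 X` iff `X` is empty, and `IndLe (n+1) X` iff every point of `X` has
arbitrarily small open neighborhoods whose frontiers have dimension at most `n - 1`. -/
def IndLe : ℕ → (X : Type u) → [inst : TopologicalSpace X] → Prop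
  | 0, X, _ => IsEmpty X
  | n + 1, X, _i => by
    exact ∀ (x : X) (U : Set X), IsOpen U → x ∈ U →
      ∃ V : Set X, IsOpen V ∧ x ∈ V ∧ V ⊆ U ∧ IndLe n ↥(frontier V)

open Set Topology Metric

theorem indLe_zero (X : Type u) [TopologicalSpace X] : IndLe 0 X ↔ IsEmpty X := Iff.rfl

theorem indLe_succ (n : ℕ) (X : Type u) [TopologicalSpace X] :
    IndLe (n+1) X ↔ ∀ (x : X) (U : Set X), IsOpen U → x ∈ U →
      ∃ V : Set X, IsOpen V ∧ x ∈ V ∧ V ⊆ U ∧ IndLe n ↥(frontier V) := Iff.rfl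

/-- ind is monotone under topological embeddings. -/
theorem indLe_of_embedding : ∀ (n : ℕ) {X Y : Type u} [TopologicalSpace X] [TopologicalSpace Y]
    (f : X → Y), IsEmbedding f → IndLe n Y → IndLe n X := by
  intro n
  induction n with
  | zero =>
    intro X Y _ _ f _ h
    exact ⟨fun x => h.false (f x)⟩
  | succ n ih =>
    intro X Y _ _ f hf h
    rw [indLe_succ] at h ⊢
    intro x U hU hxU
    obtain ⟨W, hW, hUW⟩ := hf.isOpen_iff.mp hU
    obtain ⟨V, hVopen, hxV, hVW, hVind⟩ := h (f x) W hW (by rw [← hUW] at hxU; exact hxU)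
    refine ⟨f ⁻¹' V, hVopen.preimage hf.continuous, hxV, ?_, ?_⟩
    · intro z hz
      rw [← hUW]; exact hVW hz
    · -- embed frontier (f ⁻¹' V) into frontier V
      have hmem : ∀ z : ↥(frontier (f ⁻¹' V)), f z.val ∈ frontier V := by
        rintro ⟨z, hz⟩
        have h1 : z ∈ closure (f ⁻¹' V) := frontier_subset_closure hz
        have h2 : z ∉ f ⁻¹' V := by
          have := hz.2
          rwa [(hVopen.preimage hf.continuous).interior_eq] at this
        constructor
        · exact (hf.continuous.closure_preimage_subset V) h1
        · rwa [hVopen.interior_eq]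
      have he : IsEmbedding (fun z : ↥(frontier (f ⁻¹' V)) => (⟨f z.val, hmem z⟩ : ↥(frontier V))) := by
        have : IsEmbedding (f ∘ (Subtype.val : ↥(frontier (f ⁻¹' V)) → X)) :=
          hf.comp IsEmbedding.subtypeVal
        exact this.codRestrict _ _
      exact ih _ he hVind

theorem indLe_mono {X : Type u} [TopologicalSpace X] {n : ℕ} {s t : Set X} (h : s ⊆ t)
    (ht : IndLe n ↥t) : IndLe n ↥s :=
  indLe_of_embedding n (Set.inclusion h) (IsEmbedding.inclusion h) ht

theorem indLe_image {X : Type u} {n : ℕ} [TopologicalSpace X] {s : Set X} {A : Set ↥s}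
    (h : IndLe n ↥(Subtype.val '' A)) : IndLe n ↥A :=
  indLe_of_embedding n (fun z => ⟨z.val.val, mem_image_of_mem _ z.2⟩)
    ((IsEmbedding.subtypeVal.comp IsEmbedding.subtypeVal).codRestrict _ _) h

theorem indLe_of_image {X : Type u} {n : ℕ} [TopologicalSpace X] {s : Set X} {A : Set ↥s}
    (h : IndLe n ↥A) : IndLe n ↥(Subtype.val '' A) := by
  have hs : ∀ x : ↥(Subtype.val '' A), x.val ∈ s := fun x => Subtype.coe_image_subset s A x.2
  have hA : ∀ x : ↥(Subtype.val '' A), (⟨x.val, hs x⟩ : ↥s) ∈ A := by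
    rintro ⟨x, hx⟩
    obtain ⟨a, ha, rfl⟩ := hx
    simpa using ha
  refine indLe_of_embedding n (fun x => (⟨⟨x.val, hs x⟩, hA x⟩ : ↥A)) ?_ h
  have hc : Continuous (fun x : ↥(Subtype.val '' A) => (⟨⟨x.val, hs x⟩, hA x⟩ : ↥A)) := by
    apply Continuous.subtype_mk
    exact continuous_subtype_val.subtype_mk _
  refine IsEmbedding.of_comp hc (continuous_subtype_val.comp continuous_subtype_val) ?_
  have : ((Subtype.val ∘ Subtype.val) ∘ fun x : ↥(Subtype.val '' A) => (⟨⟨x.val, hs x⟩, hA x⟩ : ↥A))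
      = Subtype.val := rfl
  rw [this]
  exact IsEmbedding.subtypeVal

/-- In a 0-dimensional Lindelöf (second countable) space, disjoint closed sets can be
separated by a clopen set. -/
theorem clopen_sep {X : Type u} [TopologicalSpace X] [SecondCountableTopology X] (h0 : IndLe 1 X) {A B : Set X} (hA : IsClosed A) (hB : IsClosed B)
    (hAB : Disjoint A B) : ∃ W : Set X, IsClopen W ∧ A ⊆ W ∧ Disjoint W B := by
  rcases isEmpty_or_nonempty X with hX | hX
  · exact ⟨∅, isClopen_empty, fun a _ => (hX.false a).elim, disjoint_bot_left⟩
  -- for every point, a clopen neighborhood disjoint from A or from B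
  have key : ∀ x : X, ∃ V : Set X, IsClopen V ∧ x ∈ V ∧ (Disjoint V A ∨ Disjoint V B) := by
    intro x
    have hx : x ∉ A ∨ x ∉ B := by
      by_contra h
      push_neg at h
      exact absurd (hAB.ne_of_mem h.1 h.2) (fun hc => hc rfl)
    rcases hx with hx | hx
    · obtain ⟨V, hVo, hxV, hVs, hVf⟩ := (indLe_succ 0 X).mp h0 x Aᶜ hA.isOpen_compl hx
      have hfr : frontier V = ∅ :=
        Set.eq_empty_iff_forall_notMem.mpr (by rw [indLe_zero] at hVf; exact fun z hz => hVf.false ⟨z, hz⟩)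
      exact ⟨V, isClopen_iff_frontier_eq_empty.mpr hfr, hxV,
        Or.inl (Set.disjoint_left.mpr (fun {a} hv => hVs hv))⟩
    · obtain ⟨V, hVo, hxV, hVs, hVf⟩ := (indLe_succ 0 X).mp h0 x Bᶜ hB.isOpen_compl hx
      have hfr : frontier V = ∅ :=
        Set.eq_empty_iff_forall_notMem.mpr (by rw [indLe_zero] at hVf; exact fun z hz => hVf.false ⟨z, hz⟩)
      exact ⟨V, isClopen_iff_frontier_eq_empty.mpr hfr, hxV,
        Or.inr (Set.disjoint_left.mpr (fun {a} hv => hVs hv))⟩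
  choose V hVclopen hVmem hVdisj using key
  -- countable subcover
  obtain ⟨T, hTc, hTU⟩ := TopologicalSpace.isOpen_iUnion_countable V (fun x => (hVclopen x).isOpen)
  have hTuniv : ⋃ x ∈ T, V x = Set.univ := by
    rw [hTU]
    exact Set.eq_univ_of_forall (fun x => Set.mem_iUnion.mpr ⟨x, hVmem x⟩)
  obtain x₀ := hX.some
  have hTc' : (insert x₀ T).Countable := hTc.insert x₀
  obtain ⟨f, hf⟩ := (Set.countable_iff_exists_surjective ⟨x₀, Set.mem_insert _ _⟩).mp hTc'
  -- the disjointified pieces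
  set D : ℕ → Set X := fun i => V (f i) \ ⋃ j ∈ Finset.range i, V (f j) with hD
  have hDclopen : ∀ i, IsClopen (D i) := by
    intro i
    exact (hVclopen _).diff (Set.Finite.isClopen_biUnion (Finset.range i).finite_toSet
      (fun j _ => hVclopen _))
  have hDcover : ∀ x : X, ∃ i, x ∈ D i := by
    intro x
    have hx : ∃ i, x ∈ V (f i) := by
      have : x ∈ ⋃ y ∈ T, V y := by rw [hTuniv]; trivial
      obtain ⟨y, hyT, hxy⟩ := Set.mem_iUnion₂.mp this
      obtain ⟨i, hi⟩ := hf ⟨y, Set.mem_insert_of_mem _ hyT⟩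
      exact ⟨i, by rw [hi]; exact hxy⟩
    classical
    refine ⟨Nat.find hx, Nat.find_spec hx, ?_⟩
    simp only [Set.mem_iUnion, Finset.mem_range, not_exists]
    intro j hj hxj
    exact Nat.find_min hx hj hxj
  set P : ℕ → Prop := fun i => Disjoint (V (f i)) B with hPdef
  refine ⟨⋃ i ∈ {i : ℕ | P i}, D i, ?_, ?_, ?_⟩
  · constructor
    · -- closed: complement is a union of the other pieces
      have hcompl : (⋃ i ∈ {i : ℕ | P i}, D i)ᶜ
          = ⋃ i ∈ {i : ℕ | ¬ P i}, D i := by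
        apply Set.eq_of_subset_of_subset
        · intro x hx
          obtain ⟨i, hi⟩ := hDcover x
          by_cases hP : P i
          · exact absurd (Set.mem_biUnion (Set.mem_setOf.mpr hP) hi) hx
          · exact Set.mem_biUnion (Set.mem_setOf.mpr hP) hi
        · intro x hx hx'
          obtain ⟨i, hiP, hxi⟩ := Set.mem_iUnion₂.mp hx
          obtain ⟨j, hjP, hxj⟩ := Set.mem_iUnion₂.mp hx'
          have hij : i ≠ j := fun h => hiP (h ▸ hjP)
          -- D i and D j are disjoint for i ≠ j
          rcases Nat.lt_or_ge i j with h | h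
          · exact hxj.2 (Set.mem_biUnion (Finset.mem_range.mpr h) hxi.1)
          · have : i > j ∨ i = j := by omega
            rcases this with h' | h'
            · exact hxi.2 (Set.mem_biUnion (Finset.mem_range.mpr h') hxj.1)
            · exact hij h'
      refine ⟨?_⟩
      rw [hcompl]
      exact isOpen_biUnion (fun i _ => (hDclopen i).isOpen)
    · exact isOpen_biUnion (fun i _ => (hDclopen i).isOpen)
  · intro a ha
    obtain ⟨i, hi⟩ := hDcover a
    have : ¬ Disjoint (V (f i)) A := fun h => h.ne_of_mem hi.1 ha rfl
    have hP : P i := (hVdisj (f i)).resolve_left this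
    exact Set.mem_biUnion (Set.mem_setOf.mpr hP) hi
  · refine Set.disjoint_left.mpr ?_
    intro x hx hxB
    obtain ⟨i, hiP, hxi⟩ := Set.mem_iUnion₂.mp hx
    exact (Set.mem_setOf.mp hiP).ne_of_mem hxi.1 hxB rfl


/-- The 0-dimensional separation theorem: if `Z ⊆ X` has `ind Z ≤ 0` then any two disjoint
closed sets of the metric space `X` can be separated by an open set whose frontier misses `Z`. -/
theorem sep0 {X : Type u} [MetricSpace X] [SecondCountableTopology X] (Z : Set X)
    (hZ : IndLe 1 ↥Z) {A B : Set X} (hA : IsClosed A) (hB : IsClosed B) (hAB : Disjoint A B) :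
    ∃ W : Set X, IsOpen W ∧ A ⊆ W ∧ closure W ∩ B = ∅ ∧ frontier W ∩ Z = ∅ := by
  -- buffered open neighborhoods with disjoint closures
  obtain ⟨U, V, hUo, hVo, hAU, hBV, hUV⟩ := NormalSpace.normal A B hA hB hAB
  obtain ⟨U₀, hU₀o, hAU₀, hU₀c⟩ := normal_exists_closure_subset hA hUo hAU
  obtain ⟨V₀, hV₀o, hBV₀, hV₀c⟩ := normal_exists_closure_subset hB hVo hBV
  have hUV₀ : Disjoint (closure U₀) (closure V₀) := hUV.mono hU₀c hV₀c
  -- separate inside Z by a clopen set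
  have hA' : IsClosed ((Subtype.val : ↥Z → X) ⁻¹' closure U₀) :=
    isClosed_closure.preimage continuous_subtype_val
  have hB' : IsClosed ((Subtype.val : ↥Z → X) ⁻¹' closure V₀) :=
    isClosed_closure.preimage continuous_subtype_val
  obtain ⟨S₀, hS₀, hAS₀, hS₀B⟩ := clopen_sep hZ hA' hB'
    (Set.disjoint_left.mpr (fun {z} hz hz' => Set.disjoint_left.mp hUV₀ hz hz'))
  set S : Set X := Subtype.val '' S₀ with hSdef
  set T : Set X := Subtype.val '' S₀ᶜ with hTdef
  have hSZ : S ⊆ Z := Subtype.coe_image_subset Z S₀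
  have hTZ : T ⊆ Z := Subtype.coe_image_subset Z S₀ᶜ
  have hZST : Z ⊆ S ∪ T := by
    intro z hz
    by_cases h : (⟨z, hz⟩ : ↥Z) ∈ S₀
    · exact Or.inl ⟨⟨z, hz⟩, h, rfl⟩
    · exact Or.inr ⟨⟨z, hz⟩, h, rfl⟩
  have hST : S ∩ T = ∅ := by
    ext z; simp only [Set.mem_inter_iff, Set.mem_empty_iff_false, iff_false, not_and]
    rintro ⟨a, ha, rfl⟩ ⟨b, hb, hba⟩
    exact hb (by rwa [Subtype.ext hba.symm] at ha)
  -- closures of clopen pieces meet Z only in themselves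
  have clkey : ∀ (A₀ : Set ↥Z), IsClosed A₀ → ∀ z ∈ Z, z ∈ closure (Subtype.val '' A₀) →
      z ∈ Subtype.val '' A₀ := by
    intro A₀ hA₀ z hz hzc
    have h1 : (⟨z, hz⟩ : ↥Z) ∈ closure A₀ := by
      rw [IsEmbedding.subtypeVal.closure_eq_preimage_closure_image A₀]
      exact hzc
    exact ⟨⟨z, hz⟩, hA₀.closure_eq ▸ h1, rfl⟩
  have hclS : closure S ∩ Z ⊆ S := fun z hz => clkey S₀ hS₀.isClosed z hz.2 hz.1
  have hclT : closure T ∩ Z ⊆ T := fun z hz => clkey S₀ᶜ (hS₀.compl.isClosed) z hz.2 hz.1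
  have hZUS : Z ∩ closure U₀ ⊆ S := by
    intro z hz
    exact ⟨⟨z, hz.1⟩, hAS₀ hz.2, rfl⟩
  have hSV₀ : S ∩ closure V₀ = ∅ := by
    ext z; simp only [Set.mem_inter_iff, Set.mem_empty_iff_false, iff_false, not_and]
    rintro ⟨a, ha, rfl⟩ h
    exact Set.disjoint_left.mp hS₀B ha h
  have hTU₀ : T ∩ closure U₀ = ∅ := by
    ext z; simp only [Set.mem_inter_iff, Set.mem_empty_iff_false, iff_false, not_and]
    rintro ⟨a, ha, rfl⟩ h
    exact ha (hAS₀ h)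
  -- degenerate cases
  rcases Set.eq_empty_or_nonempty (A ∪ S) with hAS | hASne
  · refine ⟨∅, isOpen_empty, ?_, by simp, by simp⟩
    rw [Set.union_empty_iff] at hAS
    simp [hAS.1]
  rcases Set.eq_empty_or_nonempty (B ∪ T) with hBT | hBTne
  · refine ⟨Set.univ, isOpen_univ, Set.subset_univ A, ?_, by simp⟩
    rw [Set.union_empty_iff] at hBT
    simp [hBT.1]
  -- the main construction
  set f : X → ℝ := fun x => infDist x (A ∪ S) - infDist x (B ∪ T) with hfdef
  have hf : Continuous f := (continuous_infDist_pt _).sub (continuous_infDist_pt _)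
  have infpos : ∀ (s : Set X) (x : X), s.Nonempty → x ∉ closure s → 0 < infDist x s := by
    intro s x hne hx
    rw [← Metric.infDist_closure]
    exact (IsClosed.notMem_iff_infDist_pos isClosed_closure hne.closure).mp hx
  refine ⟨{x | f x < 0}, isOpen_lt hf continuous_const, ?_, ?_, ?_⟩
  · -- A ⊆ W
    intro a ha
    have h1 : infDist a (A ∪ S) = 0 := infDist_zero_of_mem (Or.inl ha)
    have h2 : 0 < infDist a (B ∪ T) := by
      apply infpos _ _ hBTne
      rw [closure_union]
      rintro (h | h)
      · exact Set.disjoint_left.mp hAB ha (hB.closure_eq ▸ h)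
      · -- a ∈ closure T impossible: T misses U₀ which is open around a
        have hTU : Disjoint U₀ T := Set.disjoint_left.mpr (fun {z} hz hz' =>
          (Set.eq_empty_iff_forall_notMem.mp hTU₀ z) ⟨hz', subset_closure hz⟩)
        exact Set.disjoint_left.mp (hTU.closure_right hU₀o) (hAU₀ ha) h
    simp only [Set.mem_setOf_eq, hfdef]
    linarith
  · -- closure W ∩ B = ∅
    have hcl : closure {x | f x < 0} ⊆ {x | f x ≤ 0} :=
      closure_lt_subset_le hf continuous_const
    ext b; simp only [Set.mem_inter_iff, Set.mem_empty_iff_false, iff_false, not_and]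
    intro hbW hbB
    have h1 : infDist b (B ∪ T) = 0 := infDist_zero_of_mem (Or.inl hbB)
    have h2 : 0 < infDist b (A ∪ S) := by
      apply infpos _ _ hASne
      rw [closure_union]
      rintro (h | h)
      · exact Set.disjoint_left.mp hAB (hA.closure_eq ▸ h) hbB
      · have hSV : Disjoint V₀ S := Set.disjoint_left.mpr (fun {z} hz hz' =>
          (Set.eq_empty_iff_forall_notMem.mp hSV₀ z) ⟨hz', subset_closure hz⟩)
        exact Set.disjoint_left.mp (hSV.closure_right hV₀o) (hBV₀ hbB) h
    have := hcl hbW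
    simp only [Set.mem_setOf_eq, hfdef] at this
    linarith
  · -- frontier W ∩ Z = ∅
    have hfr : frontier {x | f x < 0} ⊆ {x | f x = 0} := by
      intro z hz
      have h1 : f z ≤ 0 := closure_lt_subset_le hf continuous_const hz.1
      have h2 : ¬ f z < 0 := by
        intro h
        exact hz.2 (by rw [(isOpen_lt hf continuous_const).interior_eq]; exact h)
      simp only [Set.mem_setOf_eq]
      linarith
    ext z; simp only [Set.mem_inter_iff, Set.mem_empty_iff_false, iff_false, not_and]
    intro hzf hzZ
    have hz0 : f z = 0 := hfr hzf
    rcases hZST hzZ with hzS | hzT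
    · have h1 : infDist z (A ∪ S) = 0 := infDist_zero_of_mem (Or.inr hzS)
      have h2 : infDist z (B ∪ T) = 0 := by
        simp only [hfdef] at hz0; linarith
      have h3 : z ∈ closure (B ∪ T) := by
        rw [mem_closure_iff_infDist_zero hBTne]; exact h2
      rw [closure_union] at h3
      rcases h3 with h | h
      · -- z ∈ B: but z ∈ S and S misses closure V₀ ⊇ B
        exact Set.eq_empty_iff_forall_notMem.mp hSV₀ z
          ⟨hzS, subset_closure (hBV₀ (hB.closure_eq ▸ h))⟩
      · have : z ∈ T := hclT ⟨h, hzZ⟩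
        exact Set.eq_empty_iff_forall_notMem.mp hST z ⟨hzS, this⟩
    · have h1 : infDist z (B ∪ T) = 0 := infDist_zero_of_mem (Or.inr hzT)
      have h2 : infDist z (A ∪ S) = 0 := by
        simp only [hfdef] at hz0; linarith
      have h3 : z ∈ closure (A ∪ S) := by
        rw [mem_closure_iff_infDist_zero hASne]; exact h2
      rw [closure_union] at h3
      rcases h3 with h | h
      · exact Set.eq_empty_iff_forall_notMem.mp hTU₀ z
          ⟨hzT, subset_closure (hAU₀ (hA.closure_eq ▸ h))⟩
      · have : z ∈ S := hclS ⟨h, hzZ⟩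
        exact Set.eq_empty_iff_forall_notMem.mp hST z ⟨this, hzT⟩

/-- Composition theorem: a union of a subset of dimension ≤ n-1 and a subset of dimension ≤ 0
has dimension ≤ n. -/
theorem comp_thm {X : Type u} [MetricSpace X] [SecondCountableTopology X] {n : ℕ}
    {Y Z : Set X} (hcov : Y ∪ Z = Set.univ) (hY : IndLe n ↥Y) (hZ : IndLe 1 ↥Z) :
    IndLe (n+1) X := by
  rw [indLe_succ]
  intro x U hU hxU
  obtain ⟨W, hWo, hxW, hWB, hWZ⟩ := sep0 Z hZ (isClosed_singleton (x := x)) hU.isClosed_compl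
    (Set.disjoint_left.mpr (fun {z} hz hz' => hz' (hz ▸ hxU)))
  refine ⟨W, hWo, hxW rfl, ?_, ?_⟩
  · intro z hz
    by_contra h
    exact Set.eq_empty_iff_forall_notMem.mp hWB z ⟨subset_closure hz, h⟩
  · refine indLe_mono ?_ hY
    intro z hz
    have : z ∈ Y ∪ Z := hcov ▸ Set.mem_univ z
    rcases this with h | h
    · exact h
    · exact absurd ⟨hz, h⟩ (Set.eq_empty_iff_forall_notMem.mp hWZ z)

/-- Countable closed sum theorem in dimension 0. -/
theorem sum0 {X : Type u} [MetricSpace X] [SecondCountableTopology X] (C : ℕ → Set X)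
    (hcl : ∀ i, IsClosed (C i)) (hcov : (⋃ i, C i) = Set.univ)
    (hind : ∀ i, IndLe 1 ↥(C i)) : IndLe 1 X := by
  rw [indLe_succ]
  intro x U hU hxU
  set B := Uᶜ with hBdef
  have hBc : IsClosed B := hU.isClosed_compl
  set Inv : Set X × Set X → Prop := fun p =>
    IsOpen p.1 ∧ IsOpen p.2 ∧ x ∈ p.1 ∧ B ⊆ p.2 ∧ Disjoint (closure p.1) (closure p.2)
    with hInvdef
  -- initial pair
  have hxB : Disjoint ({x} : Set X) B := Set.disjoint_left.mpr
    (fun {z} hz hz' => hz' (hz ▸ hxU))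
  obtain ⟨U', V', hU'o, hV'o, hxU', hBV', hUV'⟩ :=
    NormalSpace.normal {x} B isClosed_singleton hBc hxB
  obtain ⟨G₀, hG₀o, hxG₀, hG₀c⟩ := normal_exists_closure_subset isClosed_singleton hU'o hxU'
  obtain ⟨H₀, hH₀o, hBH₀, hH₀c⟩ := normal_exists_closure_subset hBc hV'o hBV'
  have inv0 : Inv (G₀, H₀) := ⟨hG₀o, hH₀o, hxG₀ rfl, hBH₀, hUV'.mono hG₀c hH₀c⟩
  -- the inductive step
  have step : ∀ p : Set X × Set X, Inv p → ∀ i : ℕ,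
      ∃ q : Set X × Set X, Inv q ∧ p.1 ⊆ q.1 ∧ p.2 ⊆ q.2 ∧ C i ⊆ q.1 ∪ q.2 := by
    rintro ⟨G, H⟩ ⟨hGo, hHo, hxG, hBH, hGH⟩ i
    have hA' : IsClosed ((Subtype.val : ↥(C i) → X) ⁻¹' closure G) :=
      isClosed_closure.preimage continuous_subtype_val
    have hB' : IsClosed ((Subtype.val : ↥(C i) → X) ⁻¹' closure H) :=
      isClosed_closure.preimage continuous_subtype_val
    obtain ⟨P₀, hP₀, hGP₀, hP₀H⟩ := clopen_sep (hind i) hA' hB'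
      (hGH.preimage (Subtype.val : ↥(C i) → X))
    set P : Set X := Subtype.val '' P₀ with hPdef
    set Q : Set X := Subtype.val '' P₀ᶜ with hQdef
    have hPc : IsClosed P := (hcl i).isClosedEmbedding_subtypeVal.isClosedMap _ hP₀.isClosed
    have hQc : IsClosed Q := (hcl i).isClosedEmbedding_subtypeVal.isClosedMap _ hP₀.compl.isClosed
    have hPQdisj : Disjoint (closure G ∪ P) (closure H ∪ Q) := by
      rw [Set.disjoint_left]
      rintro z (hz | hz) (hz' | hz')
      · exact Set.disjoint_left.mp hGH hz hz'
      · obtain ⟨a, ha, rfl⟩ := hz'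
        exact ha (hGP₀ hz)
      · obtain ⟨a, ha, rfl⟩ := hz
        exact Set.disjoint_left.mp hP₀H ha hz'
      · obtain ⟨a, ha, rfl⟩ := hz
        obtain ⟨b, hb, hba⟩ := hz'
        exact hb (by rwa [Subtype.ext hba.symm] at ha)
    have hcl1 : IsClosed (closure G ∪ P) := isClosed_closure.union hPc
    have hcl2 : IsClosed (closure H ∪ Q) := isClosed_closure.union hQc
    obtain ⟨G₁, H₁, hG₁o, hH₁o, h1, h2, h12⟩ := NormalSpace.normal _ _ hcl1 hcl2 hPQdisj
    obtain ⟨G', hG'o, hG'1, hG'c⟩ := normal_exists_closure_subset hcl1 hG₁o h1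
    obtain ⟨H', hH'o, hH'1, hH'c⟩ := normal_exists_closure_subset hcl2 hH₁o h2
    refine ⟨(G', H'), ⟨hG'o, hH'o, ?_, ?_, h12.mono hG'c hH'c⟩, ?_, ?_, ?_⟩
    · exact hG'1 (Or.inl (subset_closure hxG))
    · exact fun b hb => hH'1 (Or.inl (subset_closure (hBH hb)))
    · exact fun z hz => hG'1 (Or.inl (subset_closure hz))
    · exact fun z hz => hH'1 (Or.inl (subset_closure hz))
    · intro z hz
      by_cases h : (⟨z, hz⟩ : ↥(C i)) ∈ P₀
      · exact Or.inl (hG'1 (Or.inr ⟨⟨z, hz⟩, h, rfl⟩))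
      · exact Or.inr (hH'1 (Or.inr ⟨⟨z, hz⟩, h, rfl⟩))
  choose stepf hInv' hmG hmH hmC using step
  let seq : ℕ → {p : Set X × Set X // Inv p} :=
    fun n => Nat.rec ⟨(G₀, H₀), inv0⟩
      (fun i prev => ⟨stepf prev.1 prev.2 i, hInv' prev.1 prev.2 i⟩) n
  have hmonoG : ∀ i, (seq i).1.1 ⊆ (seq (i+1)).1.1 := fun i => hmG (seq i).1 (seq i).2 i
  have hmonoH : ∀ i, (seq i).1.2 ⊆ (seq (i+1)).1.2 := fun i => hmH (seq i).1 (seq i).2 i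
  have hcovC : ∀ i, C i ⊆ (seq (i+1)).1.1 ∪ (seq (i+1)).1.2 :=
    fun i => hmC (seq i).1 (seq i).2 i
  have chainG : ∀ i j, i ≤ j → (seq i).1.1 ⊆ (seq j).1.1 := by
    intro i j hij
    induction j, hij using Nat.le_induction with
    | base => exact subset_rfl
    | succ j hij ih => exact ih.trans (hmonoG j)
  have chainH : ∀ i j, i ≤ j → (seq i).1.2 ⊆ (seq j).1.2 := by
    intro i j hij
    induction j, hij using Nat.le_induction with
    | base => exact subset_rfl
    | succ j hij ih => exact ih.trans (hmonoH j)
  set G : Set X := ⋃ i, (seq i).1.1 with hGdef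
  set H : Set X := ⋃ i, (seq i).1.2 with hHdef
  have hGopen : IsOpen G := isOpen_iUnion (fun i => (seq i).2.1)
  have hHopen : IsOpen H := isOpen_iUnion (fun i => (seq i).2.2.1)
  have hGHdisj : Disjoint G H := by
    rw [Set.disjoint_left]
    intro z hzG hzH
    obtain ⟨i, hi⟩ := Set.mem_iUnion.mp hzG
    obtain ⟨j, hj⟩ := Set.mem_iUnion.mp hzH
    have h1 : z ∈ (seq (max i j)).1.1 := chainG i _ (le_max_left i j) hi
    have h2 : z ∈ (seq (max i j)).1.2 := chainH j _ (le_max_right i j) hj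
    exact Set.disjoint_left.mp (seq (max i j)).2.2.2.2.2
      (subset_closure h1) (subset_closure h2)
  have hGHcov : G ∪ H = Set.univ := by
    apply Set.eq_univ_of_forall
    intro z
    have : z ∈ ⋃ i, C i := hcov ▸ Set.mem_univ z
    obtain ⟨i, hi⟩ := Set.mem_iUnion.mp this
    rcases hcovC i hi with h | h
    · exact Or.inl (Set.mem_iUnion.mpr ⟨i+1, h⟩)
    · exact Or.inr (Set.mem_iUnion.mpr ⟨i+1, h⟩)
  have hxG : x ∈ G := Set.mem_iUnion.mpr ⟨0, (seq 0).2.2.2.1⟩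
  have hBH : B ⊆ H := fun b hb => Set.mem_iUnion.mpr ⟨0, (seq 0).2.2.2.2.1 hb⟩
  have hGU : G ⊆ U := by
    intro z hz
    by_contra h
    exact Set.disjoint_left.mp hGHdisj hz (hBH h)
  have hGclosed : IsClosed G := by
    have : Gᶜ = H := by
      apply Set.eq_of_subset_of_subset
      · intro z hz
        rcases (hGHcov ▸ Set.mem_univ z : z ∈ G ∪ H) with h | h
        · exact absurd h hz
        · exact h
      · exact fun z hz hz' => Set.disjoint_left.mp hGHdisj hz' hz
    exact ⟨this ▸ hHopen⟩
  refine ⟨G, hGopen, hxG, hGU, ?_⟩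
  have : frontier G = ∅ := isClopen_iff_frontier_eq_empty.mp ⟨hGclosed, hGopen⟩
  rw [indLe_zero, this]
  simp

theorem indLe_of_isEmpty {Y : Type u} [TopologicalSpace Y] (h : IsEmpty Y) (n : ℕ) :
    IndLe n Y := by
  cases n with
  | zero => exact h
  | succ n => exact fun x => (h.false x).elim

/-- Decomposition: a space of dimension ≤ n decomposes into a countable union of closed
subsets of dimension ≤ n-1 together with a 0-dimensional remainder. -/
theorem dec_thm {X : Type u} [MetricSpace X] [SecondCountableTopology X] {n : ℕ}
    (h : IndLe (n+1) X) :
    ∃ F : ℕ → Set X, (∀ i, IsClosed (F i)) ∧ (∀ i, IndLe n ↥(F i)) ∧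
      IndLe 1 ↥((⋃ i, F i)ᶜ : Set X) := by
  classical
  -- a countable basis, padded with `univ`
  obtain ⟨b, hbc, hbne, hbasis⟩ := TopologicalSpace.exists_countable_basis X
  obtain ⟨e, he⟩ : ∃ e : ℕ → Set X, insert Set.univ b = Set.range e :=
    Set.Countable.exists_eq_range (hbc.insert Set.univ) ⟨Set.univ, Set.mem_insert _ _⟩
  have heopen : ∀ i, IsOpen (e i) := by
    intro i
    have : e i ∈ insert Set.univ b := he ▸ Set.mem_range_self i
    rcases this with h | h
    · rw [h]; exact isOpen_univ
    · exact hbasis.isOpen h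
  have hbidx : ∀ s ∈ b, ∃ i, e i = s := by
    intro s hs
    have : s ∈ Set.range e := he ▸ Set.mem_insert_of_mem _ hs
    exact this
  -- choose good open sets between pairs of basic sets whenever possible
  set Cond : ℕ → ℕ → Prop := fun i j =>
    ∃ V : Set X, IsOpen V ∧ IndLe n ↥(frontier V) ∧ e i ⊆ V ∧ V ⊆ e j with hConddef
  have hchoice : ∀ i j : ℕ, ∃ V : Set X, IsOpen V ∧ IndLe n ↥(frontier V) ∧
      (Cond i j → e i ⊆ V ∧ V ⊆ e j) := by
    intro i j
    by_cases hc : Cond i j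
    · obtain ⟨V, h1, h2, h3, h4⟩ := hc
      exact ⟨V, h1, h2, fun _ => ⟨h3, h4⟩⟩
    · refine ⟨∅, isOpen_empty, ?_, fun h => absurd h hc⟩
      apply indLe_of_isEmpty
      rw [frontier_empty]
      simp
  choose Vf hVopen hVind hVsub using hchoice
  -- the closed pieces are the frontiers of the chosen sets
  set F : ℕ → Set X := fun k => frontier (Vf k.unpair.1 k.unpair.2) with hFdef
  refine ⟨F, fun k => isClosed_frontier, fun k => hVind _ _, ?_⟩
  -- the key property: a basis of good sets
  have key : ∀ (x : X) (O : Set X), IsOpen O → x ∈ O →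
      ∃ i j, Cond i j ∧ x ∈ e i ∧ e i ⊆ Vf i j ∧ Vf i j ⊆ e j ∧ e j ⊆ O := by
    intro x O hO hxO
    obtain ⟨s, hsb, hxs, hsO⟩ := hbasis.exists_subset_of_mem_open hxO hO
    obtain ⟨j, hj⟩ := hbidx s hsb
    obtain ⟨V, hVo, hxV, hVs, hVi⟩ := (indLe_succ n X).mp h x s (hbasis.isOpen hsb) hxs
    obtain ⟨t, htb, hxt, htV⟩ := hbasis.exists_subset_of_mem_open hxV hVo
    obtain ⟨i, hi⟩ := hbidx t htb
    have hcond : Cond i j := ⟨V, hVo, hVi, hi ▸ htV, hj ▸ hVs⟩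
    obtain ⟨h3, h4⟩ := hVsub i j hcond
    exact ⟨i, j, hcond, hi ▸ hxt, h3, h4, hj ▸ hsO⟩
  -- the remainder is 0-dimensional
  rw [indLe_succ]
  intro z W hW hzW
  obtain ⟨O, hO, hOW⟩ := IsEmbedding.subtypeVal.isOpen_iff.mp hW
  have hzO : z.val ∈ O := by rw [← hOW] at hzW; exact hzW
  obtain ⟨i, j, hcond, hxi, h3, h4, h5⟩ := key z.val O hO hzO
  refine ⟨Subtype.val ⁻¹' (Vf i j), (hVopen i j).preimage continuous_subtype_val,
    h3 hxi, ?_, ?_⟩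
  · intro w hw
    rw [← hOW]
    exact h5 (h4 hw)
  · -- the frontier in the subspace is empty
    have hfr : frontier (Subtype.val ⁻¹' (Vf i j) :
        Set ↥((⋃ i, F i)ᶜ : Set X)) = ∅ := by
      apply Set.eq_empty_iff_forall_notMem.mpr
      intro w hw
      have h1 : w.val ∈ frontier (Vf i j) :=
        continuous_subtype_val.frontier_preimage_subset _ hw
      have h2 : w.val ∈ (⋃ k, F k)ᶜ := w.2
      apply h2
      refine Set.mem_iUnion.mpr ⟨Nat.pair i j, ?_⟩
      simp only [hFdef, Nat.unpair_pair]
      exact h1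
    rw [hfr]
    apply indLe_of_isEmpty
    simp

/-- Countable closed sum theorem. -/
theorem sumN : ∀ (n : ℕ) (X : Type u) [MetricSpace X] [SecondCountableTopology X]
    (C : ℕ → Set X), (∀ i, IsClosed (C i)) → (⋃ i, C i) = Set.univ →
    (∀ i, IndLe (n+1) ↥(C i)) → IndLe (n+1) X := by
  intro n
  induction n with
  | zero =>
    intro X _ _ C hcl hcov hind
    exact sum0 C hcl hcov hind
  | succ n ih =>
    intro X _ _ C hcl hcov hind
    -- decompose each piece
    have hdec := fun i => dec_thm (X := ↥(C i)) (hind i)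
    choose F hFcl hFind hFrem using hdec
    -- the (n-1)-dimensional closed kernel
    set G : ℕ → Set X := fun k =>
      Subtype.val '' (F k.unpair.1 k.unpair.2) with hGdef
    have hGcl : ∀ k, IsClosed (G k) := fun k =>
      (hcl _).isClosedEmbedding_subtypeVal.isClosedMap _ (hFcl _ _)
    have hGind : ∀ k, IndLe (n+1) ↥(G k) := fun k => indLe_of_image (hFind _ _)
    set Y : Set X := ⋃ k, G k with hYdef
    have hGY : ∀ k, G k ⊆ Y := fun k => Set.subset_iUnion G k
    -- Y has dimension ≤ n via the inductive hypothesis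
    have hYind : IndLe (n+1) ↥Y := by
      apply ih ↥Y (fun k => (Subtype.val ⁻¹' (G k) : Set ↥Y))
      · exact fun k => (hGcl k).preimage continuous_subtype_val
      · apply Set.eq_univ_of_forall
        rintro ⟨z, hz⟩
        obtain ⟨k, hk⟩ := Set.mem_iUnion.mp hz
        exact Set.mem_iUnion.mpr ⟨k, hk⟩
      · intro k
        apply indLe_image
        have himg : (Subtype.val '' (Subtype.val ⁻¹' (G k) : Set ↥Y)) = G k := by
          rw [Subtype.image_preimage_coe]
          exact Set.inter_eq_self_of_subset_right (hGY k)
        rw [himg]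
        exact hGind k
    -- the complement is 0-dimensional via the 0-dimensional sum theorem
    have hZind : IndLe 1 ↥(Yᶜ : Set X) := by
      apply sum0 (fun i => (Subtype.val ⁻¹' (C i) : Set ↥(Yᶜ : Set X)))
      · exact fun i => (hcl i).preimage continuous_subtype_val
      · apply Set.eq_univ_of_forall
        rintro ⟨z, hz⟩
        have : z ∈ ⋃ i, C i := hcov ▸ Set.mem_univ z
        obtain ⟨i, hi⟩ := Set.mem_iUnion.mp this
        exact Set.mem_iUnion.mpr ⟨i, hi⟩
      · intro i
        apply indLe_image
        have himg : (Subtype.val '' (Subtype.val ⁻¹' (C i) : Set ↥(Yᶜ : Set X)))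
            = C i ∩ Yᶜ := by
          rw [Subtype.image_preimage_coe]
          exact Set.inter_comm _ _
        rw [himg]
        -- C i ∩ Yᶜ sits inside the 0-dimensional remainder of C i
        have hsub : C i ∩ Yᶜ ⊆ Subtype.val '' ((⋃ j, F i j)ᶜ : Set ↥(C i)) := by
          rintro z ⟨hzC, hzY⟩
          refine ⟨⟨z, hzC⟩, ?_, rfl⟩
          intro hmem
          obtain ⟨j, hj⟩ := Set.mem_iUnion.mp hmem
          apply hzY
          have hGpair : G (Nat.pair i j) = Subtype.val '' (F i j) := by
            show Subtype.val '' F (Nat.unpair (Nat.pair i j)).1 (Nat.unpair (Nat.pair i j)).2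
              = Subtype.val '' (F i j)
            rw [Nat.unpair_pair]
          refine Set.mem_iUnion.mpr ⟨Nat.pair i j, ?_⟩
          rw [hGpair]
          exact ⟨⟨z, hzC⟩, hj, rfl⟩
        exact indLe_mono hsub (indLe_of_image (hFrem i))
    exact comp_thm (Set.union_compl_self Y) hYind hZind

/-- Behrstock–Minsky Lemma 4.2: if a metric space `X` admits a family of closed
subspaces which separates points and whose members have all locally compact
subspaces of small inductive dimension at most `N - 1`, then every locally compact
subspace of `X` has small inductive dimension at most `N`. -/
theorem stmt14 {X : Type u} [MetricSpace X] (N : ℕ)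
    (𝓛 : Set (Set X)) (hclosed : ∀ L ∈ 𝓛, IsClosed L)
    (hsep : ∀ x y : X, x ≠ y → ∃ L ∈ 𝓛, ∃ U V : Set X,
      IsOpen U ∧ IsOpen V ∧ Disjoint U V ∧ x ∈ U ∧ y ∈ V ∧ U ∪ V = Lᶜ)
    (hdim : ∀ L ∈ 𝓛, ∀ K : Set X, K ⊆ L → LocallyCompactSpace ↥K → IndLe N ↥K)
    (K : Set X) (hK : LocallyCompactSpace ↥K) :
    IndLe (N + 1) ↥K := by
  classical
  rw [indLe_succ]
  intro x U hU hxU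
  -- a compact neighborhood inside U
  obtain ⟨Cs, hCnhds, hCU, hCcomp⟩ :=
    LocallyCompactSpace.local_compact_nhds x U (hU.mem_nhds hxU)
  set D : Set ↥K := interior Cs with hDdef
  have hDopen : IsOpen D := isOpen_interior
  have hxD : x ∈ D := mem_interior_iff_mem_nhds.mpr hCnhds
  have hCclosed : IsClosed Cs := hCcomp.isClosed
  have hclD : closure D ⊆ Cs := by
    calc closure D ⊆ closure Cs := closure_mono interior_subset
    _ = Cs := hCclosed.closure_eq
  set BD : Set ↥K := closure D \ D with hBDdef
  have hBDclosed : IsClosed BD := isClosed_closure.inter hDopen.isClosed_compl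
  have hBDcomp : IsCompact BD := hCcomp.of_isClosed_subset hBDclosed
    (fun z hz => hclD hz.1)
  -- separate x from each boundary point
  have hch : ∀ y : {y : ↥K // y ∈ BD}, ∃ Le Ux Vy : Set X, Le ∈ 𝓛 ∧ IsOpen Ux ∧ IsOpen Vy ∧
      Disjoint Ux Vy ∧ (x : X) ∈ Ux ∧ ((y : ↥K) : X) ∈ Vy ∧ Ux ∪ Vy = Leᶜ := by
    rintro ⟨y, hy⟩
    have hxy : (x : X) ≠ (y : X) := by
      intro h
      exact hy.2 (by rwa [Subtype.coe_injective h] at hxD)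
    obtain ⟨Le, hLe, Ux, Vy, h1, h2, h3, h4, h5, h6⟩ := hsep (x : X) (y : X) hxy
    exact ⟨Le, Ux, Vy, hLe, h1, h2, h3, h4, h5, h6⟩
  choose Lf Uxf Vyf hLf hUof hVof hdisjf hxUf hyVf hunionf using hch
  -- finite subcover of the boundary
  have hcover : BD ⊆ ⋃ y : {y : ↥K // y ∈ BD}, Subtype.val ⁻¹' (Vyf y) := by
    intro z hz
    exact Set.mem_iUnion.mpr ⟨⟨z, hz⟩, hyVf ⟨z, hz⟩⟩
  obtain ⟨t, ht⟩ := hBDcomp.elim_finite_subcover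
    (fun y => (Subtype.val ⁻¹' (Vyf y) : Set ↥K))
    (fun y => (hVof y).preimage continuous_subtype_val) hcover
  -- the neighborhood
  set V : Set ↥K := D ∩ ⋂ y ∈ t, Subtype.val ⁻¹' (Uxf y) with hVdef
  have hVopen : IsOpen V := hDopen.inter
    (isOpen_biInter_finset (fun y _ => (hUof y).preimage continuous_subtype_val))
  have hxV : x ∈ V := ⟨hxD, Set.mem_iInter₂.mpr (fun y _ => hxUf y)⟩
  have hVU : V ⊆ U := fun z hz => hCU (interior_subset hz.1)
  refine ⟨V, hVopen, hxV, hVU, ?_⟩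
  -- the frontier lies in the union of the separating sets
  set FR : Set ↥K := frontier V with hFRdef
  have hFRfacts : ∀ z ∈ FR, z ∈ closure V ∧ z ∉ V := by
    intro z hz
    rw [hFRdef, hVopen.frontier_eq] at hz
    exact ⟨hz.1, hz.2⟩
  have hfront : ∀ z ∈ FR, ∃ y ∈ t, z ∈ Subtype.val ⁻¹' (Lf y) := by
    intro z hz
    obtain ⟨hzc, hznV⟩ := hFRfacts z hz
    by_contra hcon
    push_neg at hcon
    have hUxVy : ∀ y ∈ t, (z : X) ∈ Uxf y ∪ Vyf y := by
      intro y hy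
      have : (z : X) ∈ (Lf y)ᶜ := hcon y hy
      rw [← hunionf y] at this
      exact this
    by_cases hcase : ∃ y ∈ t, (z : X) ∈ Vyf y
    · obtain ⟨y, hyt, hzy⟩ := hcase
      -- an open set around z disjoint from V
      have hO : IsOpen (Subtype.val ⁻¹' (Vyf y) : Set ↥K) :=
        (hVof y).preimage continuous_subtype_val
      obtain ⟨w, hw⟩ := mem_closure_iff.mp hzc _ hO hzy
      have hwU : (w : X) ∈ Uxf y := Set.mem_iInter₂.mp hw.2.2 y hyt
      exact Set.disjoint_left.mp (hdisjf y) hwU hw.1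
    · push_neg at hcase
      have hallU : ∀ y ∈ t, (z : X) ∈ Uxf y := by
        intro y hy
        rcases hUxVy y hy with h | h
        · exact h
        · exact absurd h (hcase y hy)
      have hznD : z ∉ D := by
        intro hzD
        exact hznV ⟨hzD, Set.mem_iInter₂.mpr (fun y hy => hallU y hy)⟩
      have hzBD : z ∈ BD := ⟨closure_mono (Set.inter_subset_left) hzc, hznD⟩
      obtain ⟨y, hyt, hzy⟩ := Set.mem_iUnion₂.mp (ht hzBD)
      exact Set.disjoint_left.mp (hdisjf y) (hallU y hyt) hzy
  -- FR is compact
  have hFRclosed : IsClosed FR := isClosed_frontier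
  have hFRsub : FR ⊆ Cs := by
    intro z hz
    exact hclD (closure_mono (Set.inter_subset_left) (hFRfacts z hz).1)
  have hFRcomp : IsCompact FR := hCcomp.of_isClosed_subset hFRclosed hFRsub
  -- the pieces of FR
  set A : {y : ↥K // y ∈ BD} → Set ↥K := fun y => FR ∩ Subtype.val ⁻¹' (Lf y) with hAdef
  have hAclosed : ∀ y, IsClosed (A y) := fun y =>
    hFRclosed.inter ((hclosed _ (hLf y)).preimage continuous_subtype_val)
  have hAind : ∀ y, IndLe N ↥(A y) := by
    intro y
    have hAcomp : IsCompact (A y) := hFRcomp.of_isClosed_subset (hAclosed y)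
      Set.inter_subset_left
    have hScomp : IsCompact (Subtype.val '' (A y) : Set X) :=
      hAcomp.image continuous_subtype_val
    haveI : CompactSpace ↥(Subtype.val '' (A y) : Set X) :=
      isCompact_iff_compactSpace.mp hScomp
    have hSsub : (Subtype.val '' (A y) : Set X) ⊆ Lf y := by
      rintro z ⟨w, hw, rfl⟩
      exact hw.2
    have := hdim (Lf y) (hLf y) (Subtype.val '' (A y)) hSsub inferInstance
    exact indLe_image this
  -- conclude
  cases N with
  | zero =>
    rw [indLe_zero]
    refine ⟨fun z => ?_⟩
    obtain ⟨y, hyt, hzy⟩ := hfront z.val z.2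
    have : z.val ∈ A y := ⟨z.2, hzy⟩
    exact (hAind y).false ⟨z.val, this⟩
  | succ k =>
    -- FR is a compact metric space, hence second countable
    haveI : CompactSpace ↥FR := isCompact_iff_compactSpace.mp hFRcomp
    rcases Finset.eq_empty_or_nonempty t with hte | htne
    · -- empty boundary cover: FR is empty
      apply indLe_of_isEmpty
      refine ⟨fun z => ?_⟩
      obtain ⟨y, hyt, _⟩ := hfront z.val z.2
      rw [hte] at hyt
      exact absurd hyt (Finset.notMem_empty y)
    · obtain ⟨g, hg⟩ := Set.Countable.exists_eq_range t.countable_toSet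
        ⟨htne.choose, htne.choose_spec⟩
      apply sumN k ↥FR (fun m => (Subtype.val ⁻¹' (A (g m)) : Set ↥FR))
      · exact fun m => (hAclosed (g m)).preimage continuous_subtype_val
      · apply Set.eq_univ_of_forall
        intro z
        obtain ⟨y, hyt, hzy⟩ := hfront z.val z.2
        have : y ∈ Set.range g := hg ▸ hyt
        obtain ⟨m, rfl⟩ := this
        exact Set.mem_iUnion.mpr ⟨m, ⟨z.2, hzy⟩⟩
      · intro m
        apply indLe_image
        have himg : (Subtype.val '' (Subtype.val ⁻¹' (A (g m)) : Set ↥FR)) = A (g m) := by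
          rw [Subtype.image_preimage_coe]
          exact Set.inter_eq_self_of_subset_right Set.inter_subset_left
        rw [himg]
        exact hAind (g m)
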